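/- Let t ∈ 𝔻[ω] and let k > 0 be a denominator exponent for t (i.e., √2^k·t ∈ ℤ[ω]). Then k is the least denominator exponent for t if and only if √2^k·t is irreducible modulo 2, i.e., there exists no y ∈ ℤ[ω] with √2^k·t ≡ √2·y (mod 2). -/
import Mathlib


noncomputable section

/-- The eighth root of unity `ω = e^{iπ/4} = (1+i)/√2`. -/
def ω : ℂ := (1 + Complex.I) / Real.sqrt 2

/-- A rational number is dyadic if it has the form `a / 2^n` with `a ∈ ℤ`, `n ∈ ℕ`. -/
def IsDyadic (q : ℚ) : Prop := ∃ (a : ℤ) (n : ℕ), q = a / 2 ^ n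

/-- Membership in the ring `𝔻[ω] = ℤ[1/√2, i]`: complex numbers of the form
`aω³ + bω² + cω + d` with `a, b, c, d` dyadic rationals. -/
def inDω (t : ℂ) : Prop :=
  ∃ a b c d : ℚ, IsDyadic a ∧ IsDyadic b ∧ IsDyadic c ∧ IsDyadic d ∧
    t = (a : ℂ) * ω ^ 3 + (b : ℂ) * ω ^ 2 + (c : ℂ) * ω + (d : ℂ)

/-- Membership in the ring `ℤ[ω]`: complex numbers of the form
`aω³ + bω² + cω + d` with `a, b, c, d ∈ ℤ`. -/
def inZω (t : ℂ) : Prop :=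
  ∃ a b c d : ℤ, t = (a : ℂ) * ω ^ 3 + (b : ℂ) * ω ^ 2 + (c : ℂ) * ω + (d : ℂ)

lemma sq2_ne : (Real.sqrt 2 : ℂ) ≠ 0 := by
  simp [Complex.ofReal_ne_zero, Real.sqrt_ne_zero']

lemma sq2_sq : (Real.sqrt 2 : ℂ) ^ 2 = 2 := by
  rw [← Complex.ofReal_pow, Real.sq_sqrt (by norm_num)]; norm_num

lemma sq2_mul_ω : (Real.sqrt 2 : ℂ) * ω = 1 + Complex.I := by
  rw [ω, mul_div_cancel₀ _ sq2_ne]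

lemma ω_sq : ω ^ 2 = Complex.I := by
  have h := sq2_sq
  have : ((Real.sqrt 2 : ℂ) * ω) ^ 2 = (1 + Complex.I)^2 := by rw [sq2_mul_ω]
  rw [mul_pow, h] at this
  have h2 : (1 + Complex.I)^2 = 2 * Complex.I := by
    ring_nf; simp [Complex.I_sq]
  rw [h2] at this
  field_simp at this
  exact this

lemma ω_pow4 : ω ^ 4 = -1 := by
  have : ω ^ 4 = (ω ^ 2) ^ 2 := by ring
  rw [this, ω_sq, Complex.I_sq]

lemma sq2_eq : (Real.sqrt 2 : ℂ) = ω - ω ^ 3 := by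
  apply mul_left_cancel₀ sq2_ne
  rw [← sq, sq2_sq]
  have h1 : (Real.sqrt 2 : ℂ) * (ω - ω ^ 3) =
      (Real.sqrt 2 * ω) * (1 - ω ^ 2) := by ring
  rw [h1, sq2_mul_ω, ω_sq]
  ring_nf
  simp [Complex.I_sq]
  ring

lemma inZω_zero : inZω 0 := ⟨0, 0, 0, 0, by simp⟩

lemma inZω_add {s t : ℂ} (hs : inZω s) (ht : inZω t) : inZω (s + t) := by
  obtain ⟨a, b, c, d, rfl⟩ := hs
  obtain ⟨a', b', c', d', rfl⟩ := ht
  exact ⟨a + a', b + b', c + c', d + d', by push_cast; ring⟩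

lemma inZω_sq2_mul {t : ℂ} (ht : inZω t) : inZω ((Real.sqrt 2 : ℂ) * t) := by
  obtain ⟨a, b, c, d, rfl⟩ := ht
  refine ⟨b - d, a + c, b + d, c - a, ?_⟩
  rw [sq2_eq]
  push_cast
  linear_combination ((a : ℂ) - c - a * ω ^ 2 - b * ω) * ω_pow4

lemma inZω_sq2_pow_mul {t : ℂ} (ht : inZω t) (n : ℕ) :
    inZω ((Real.sqrt 2 : ℂ) ^ n * t) := by
  induction n with
  | zero => simpa using ht
  | succ m ih =>
      have := inZω_sq2_mul ih
      rwa [show (Real.sqrt 2 : ℂ) * ((Real.sqrt 2:ℂ) ^ m * t)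
        = (Real.sqrt 2:ℂ) ^ (m + 1) * t by ring] at this

/-- For `t ∈ 𝔻[ω]` and a denominator exponent `k > 0` of `t`: `k` is the least denominator
exponent for `t` iff `√2^k t` is irreducible modulo 2, i.e. there is no `y ∈ ℤ[ω]` with
`√2^k t ≡ √2 y (mod 2)`. -/
theorem stmt6 (t : ℂ) (ht : inDω t) (k : ℕ) (hk : 0 < k)
    (hden : inZω ((Real.sqrt 2 : ℂ) ^ k * t)) :
    IsLeast {j : ℕ | inZω ((Real.sqrt 2 : ℂ) ^ j * t)} k ↔
      ¬ ∃ y, inZω y ∧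
        inZω (((Real.sqrt 2 : ℂ) ^ k * t - (Real.sqrt 2 : ℂ) * y) / 2) := by
  have key : (∃ y, inZω y ∧
      inZω (((Real.sqrt 2 : ℂ) ^ k * t - (Real.sqrt 2 : ℂ) * y) / 2)) ↔
      inZω ((Real.sqrt 2 : ℂ) ^ (k - 1) * t) := by
    constructor
    · rintro ⟨y, hy, hz⟩
      have hpow : (Real.sqrt 2 : ℂ) ^ k = Real.sqrt 2 * (Real.sqrt 2:ℂ) ^ (k-1) := by
        rw [← pow_succ']
        congr 1
        omega
      have heq : (Real.sqrt 2 : ℂ) ^ (k - 1) * t =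
          y + Real.sqrt 2 * (((Real.sqrt 2 : ℂ) ^ k * t - Real.sqrt 2 * y) / 2) := by
        have h2 : ((Real.sqrt 2 : ℂ)) * ((Real.sqrt 2:ℂ)) = 2 := by
          have := sq2_sq; rwa [sq] at this
        field_simp
        rw [hpow]
        ring_nf
        rw [sq2_sq]
        ring
      rw [heq]
      exact inZω_add hy (inZω_sq2_mul hz)
    · intro h
      refine ⟨(Real.sqrt 2 : ℂ) ^ (k - 1) * t, h, ?_⟩
      have hpow : (Real.sqrt 2 : ℂ) ^ k = Real.sqrt 2 * (Real.sqrt 2:ℂ) ^ (k-1) := by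
        rw [← pow_succ']
        congr 1
        omega
      rw [hpow]
      rw [show Real.sqrt 2 * (Real.sqrt 2:ℂ) ^ (k-1) * t
        - (Real.sqrt 2:ℂ) * ((Real.sqrt 2:ℂ) ^ (k-1) * t) = 0 by ring]
      simpa using inZω_zero
  rw [key]
  constructor
  · rintro ⟨hmem, hlb⟩ hcon
    have := hlb hcon
    omega
  · intro hcon
    refine ⟨hden, fun j hj => ?_⟩
    by_contra hlt
    push_neg at hlt
    apply hcon
    have : (Real.sqrt 2 : ℂ) ^ (k - 1) * t
        = (Real.sqrt 2:ℂ) ^ (k - 1 - j) * ((Real.sqrt 2:ℂ) ^ j * t) := by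
      rw [← mul_assoc, ← pow_add]
      congr 2
      omega
    rw [this]
    exact inZω_sq2_pow_mul hj _
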